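/- Let χ ∈ X_fin with n = |R^+(χ)| and suppose f : {1,...,n} → I gives partial products w_t with w_y(α_{f(y+1)}) ∈ R^+(χ) for all y ≤ n−1 and w_n(Π) = −Π. If χ' is a bi-homomorphism with χ' ≡ χ (same diagonal values χ'(α_i,α_i) = χ(α_i,α_i) and same products χ'(α_i,α_j)χ'(α_j,α_i) = χ(α_i,α_j)χ(α_j,α_i)), then χ' ∈ X_fin and R^+(χ') = R^+(χ). -/

import Mathlib

/-- `ℤΠ`, the free `ℤ`-module with basis `Π = {α_1,…,α_N}`. -/
abbrev Mz (N : ℕ) := Fin N →₀ ℤ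

/-- The simple "root" `α_i`, the `i`-th basis element of `ℤΠ`. -/
noncomputable def alphav {N : ℕ} (i : Fin N) : Mz N := Finsupp.single i 1

/-- A bi-homomorphism `χ : ℤΠ × ℤΠ → ℂ*`. -/
def IsBihom {N : ℕ} (χ : Mz N → Mz N → ℂˣ) : Prop :=
  (∀ a b c : Mz N, χ a (b + c) = χ a b * χ a c) ∧
  (∀ a b c : Mz N, χ (a + b) c = χ a c * χ b c)

/-- `(m)_t := 1 + t + ⋯ + t^{m-1}`. -/
noncomputable def qnum (m : ℕ) (t : ℂ) : ℂ := ∑ j ∈ Finset.range m, t ^ j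

/-- `(m)_t! := ∏_{j=1}^m (j)_t`. -/
noncomputable def qfact (m : ℕ) (t : ℂ) : ℂ := ∏ j ∈ Finset.range m, qnum (j + 1) t

/-- `(m; t₁, t₂)! := ∏_{j=1}^m (1 - t₁^{j-1} t₂)`. -/
noncomputable def tfact (m : ℕ) (t₁ t₂ : ℂ) : ℂ := ∏ j ∈ Finset.range m, (1 - t₁ ^ j * t₂)

/-- The Cartan entry `c` (off-diagonal part) attached to `q = q_{ii}` and `r = q_{ij}q_{ji}`:
`⊥` (i.e. `-∞`) if `(m)_q!(m;q,r)! ≠ 0` for all `m`, and otherwise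
`-Max{m ∈ ℤ≥0 | (m)_q!(m;q,r)! ≠ 0}`. -/
noncomputable def cEntry (q r : ℂ) : WithBot ℤ :=
  letI := Classical.propDecidable
  if ∀ m : ℕ, qfact m q * tfact m q r ≠ 0 then ⊥
  else ((-((sSup {m : ℕ | qfact m q * tfact m q r ≠ 0} : ℕ) : ℤ) : ℤ) : WithBot ℤ)

/-- The generalized Cartan matrix `c^χ_{ij}` of a bi-homomorphism `χ`. -/
noncomputable def cMat {N : ℕ} (χ : Mz N → Mz N → ℂˣ) (i j : Fin N) : WithBot ℤ :=
  if i = j then 2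
  else cEntry (χ (alphav i) (alphav i))
    ((χ (alphav i) (alphav j) : ℂ) * (χ (alphav j) (alphav i) : ℂ))

/-- `c^χ_{ij}` as an integer (junk value `0` in the `-∞` case). -/
noncomputable def cInt {N : ℕ} (χ : Mz N → Mz N → ℂˣ) (i j : Fin N) : ℤ :=
  (cMat χ i j).unbotD 0

/-- The reflection `s^χ_i ∈ Aut_ℤ(ℤΠ)`, `s^χ_i(α_j) = α_j - c^χ_{ij} α_i`,
extended `ℤ`-linearly. -/
noncomputable def sMap {N : ℕ} (χ : Mz N → Mz N → ℂˣ) (i : Fin N) (v : Mz N) : Mz N :=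
  v - (v.sum fun j n => n * cInt χ i j) • alphav i

/-- The Lusztig twist `i★χ`, `(i★χ)(α,β) := χ(s^χ_i α, s^χ_i β)`. -/
noncomputable def starB {N : ℕ} (i : Fin N) (χ : Mz N → Mz N → ℂˣ) :
    Mz N → Mz N → ℂˣ :=
  fun a b => χ (sMap χ i a) (sMap χ i b)

/-- χ' is obtained from χ by a finite sequence of Lusztig twists (χ' ∼ χ). -/
def Reachable {N : ℕ} (χ χ' : Mz N → Mz N → ℂˣ) : Prop :=
  ∃ l : List (Fin N), χ' = l.foldl (fun ψ i => starB i ψ) χ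

/-- The iterated twists χ_{f,t}: χ_{f,0} = χ and χ_{f,t} = f(t)★χ_{f,t-1}. -/
noncomputable def chif {N : ℕ} (χ : Mz N → Mz N → ℂˣ) (f : ℕ → Fin N) :
    ℕ → (Mz N → Mz N → ℂˣ)
  | 0 => χ
  | (t + 1) => starB (f (t + 1)) (chif χ f t)

/-- The partial products w_t = s^{χ_{f,1}}_{f(1)} ∘ ⋯ ∘ s^{χ_{f,t}}_{f(t)}. -/
noncomputable def wt {N : ℕ} (χ : Mz N → Mz N → ℂˣ) (f : ℕ → Fin N) :
    ℕ → (Mz N → Mz N)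
  | 0 => id
  | (t + 1) => wt χ f t ∘ sMap (chif χ f (t + 1)) (f (t + 1))

/-- The nonzero elements of ℤ≥0 Π. -/
def PosCone (N : ℕ) : Set (Mz N) := {v | v ≠ 0 ∧ ∀ k, 0 ≤ v k}

/-- The elements of -ℤ≥0 Π. -/
def NegCone (N : ℕ) : Set (Mz N) := {v | ∀ k, v k ≤ 0}

set_option linter.unusedSectionVars false

/- ### auxiliary development -/

noncomputable def lfun {N : ℕ} (c : Fin N → ℤ) : Mz N →+ ℤ where
  toFun v := v.sum fun j n => n * c j
  map_zero' := Finsupp.sum_zero_index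
  map_add' a b := by
    exact Finsupp.sum_add_index' (fun j => zero_mul _) (fun j b1 b2 => add_mul _ _ _)

lemma lfun_single {N : ℕ} (c : Fin N → ℤ) (j : Fin N) (m : ℤ) :
    lfun c (Finsupp.single j m) = m * c j := by
  simp only [lfun, AddMonoidHom.coe_mk, ZeroHom.coe_mk]
  exact Finsupp.sum_single_index (zero_mul _)

lemma cInt_diag {N : ℕ} (χ : Mz N → Mz N → ℂˣ) (i : Fin N) : cInt χ i i = 2 := by
  simp [cInt, cMat]

lemma sMap_def {N : ℕ} (χ : Mz N → Mz N → ℂˣ) (i : Fin N) (v : Mz N) :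
    sMap χ i v = v - lfun (cInt χ i) v • alphav i := by
  simp only [sMap, lfun, AddMonoidHom.coe_mk, ZeroHom.coe_mk]

noncomputable def sHom {N : ℕ} (χ : Mz N → Mz N → ℂˣ) (i : Fin N) : Mz N →+ Mz N where
  toFun := sMap χ i
  map_zero' := by simp [sMap_def]
  map_add' a b := by
    simp only [sMap_def, map_add, add_smul]
    abel

lemma sHom_apply {N : ℕ} (χ : Mz N → Mz N → ℂˣ) (i : Fin N) (v : Mz N) :
    sHom χ i v = sMap χ i v := rfl

lemma lfun_alphav {N : ℕ} (χ : Mz N → Mz N → ℂˣ) (i j : Fin N) :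
    lfun (cInt χ i) (alphav j) = cInt χ i j := by
  simp [alphav, lfun_single]

lemma sMap_alphav {N : ℕ} (χ : Mz N → Mz N → ℂˣ) (i j : Fin N) :
    sMap χ i (alphav j) = alphav j - cInt χ i j • alphav i := by
  rw [sMap_def, lfun_alphav]

lemma sMap_alphav_self {N : ℕ} (χ : Mz N → Mz N → ℂˣ) (i : Fin N) :
    sMap χ i (alphav i) = -alphav i := by
  rw [sMap_alphav, cInt_diag, two_smul]; abel

lemma sMap_invol {N : ℕ} (χ : Mz N → Mz N → ℂˣ) (i : Fin N) (v : Mz N) :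
    sMap χ i (sMap χ i v) = v := by
  rw [sMap_def, sMap_def χ i v]
  rw [map_sub, map_zsmul, lfun_alphav, cInt_diag, smul_eq_mul]
  have h : (lfun (cInt χ i)) v - (lfun (cInt χ i)) v * 2 = -(lfun (cInt χ i)) v := by ring
  rw [h, neg_smul]
  abel

/- ### bihom lemmas -/

noncomputable def bHomL {N : ℕ} {ψ : Mz N → Mz N → ℂˣ} (h : IsBihom ψ) (b : Mz N) :
    Mz N →+ Additive ℂˣ :=
  AddMonoidHom.mk' (fun a => Additive.ofMul (ψ a b)) (fun x y => by
    simp only [← ofMul_mul, h.2 x y b])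

noncomputable def bHomR {N : ℕ} {ψ : Mz N → Mz N → ℂˣ} (h : IsBihom ψ) (a : Mz N) :
    Mz N →+ Additive ℂˣ :=
  AddMonoidHom.mk' (fun b => Additive.ofMul (ψ a b)) (fun x y => by
    simp only [← ofMul_mul, h.1 a x y])

lemma bihom_zsmul_left {N : ℕ} {ψ : Mz N → Mz N → ℂˣ} (h : IsBihom ψ)
    (m : ℤ) (a b : Mz N) : ψ (m • a) b = ψ a b ^ m := by
  have := map_zsmul (bHomL h b) m a
  simpa [bHomL, ← ofMul_zpow] using this

lemma bihom_zsmul_right {N : ℕ} {ψ : Mz N → Mz N → ℂˣ} (h : IsBihom ψ)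
    (k : ℤ) (a b : Mz N) : ψ a (k • b) = ψ a b ^ k := by
  have := map_zsmul (bHomR h a) k b
  simpa [bHomR, ← ofMul_zpow] using this

lemma bihom_expand {N : ℕ} {ψ : Mz N → Mz N → ℂˣ} (h : IsBihom ψ)
    (u w x z : Mz N) (m k : ℤ) :
    ψ (u + m • w) (x + k • z) =
      ψ u x * ψ u z ^ k * ψ w x ^ m * ψ w z ^ (m * k) := by
  rw [h.2, h.1, h.1, bihom_zsmul_left h, bihom_zsmul_left h, bihom_zsmul_right h,
    bihom_zsmul_right h, ← zpow_mul, mul_comm k m, mul_assoc, mul_assoc, mul_assoc]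

/- ### equivalence of bicharacters -/

def Equivb {N : ℕ} (ψ ψ' : Mz N → Mz N → ℂˣ) : Prop :=
  (∀ i, ψ (alphav i) (alphav i) = ψ' (alphav i) (alphav i)) ∧
  (∀ j k, ψ (alphav j) (alphav k) * ψ (alphav k) (alphav j) =
    ψ' (alphav j) (alphav k) * ψ' (alphav k) (alphav j))

lemma equiv_cInt {N : ℕ} {ψ ψ' : Mz N → Mz N → ℂˣ} (h : Equivb ψ ψ') (i j : Fin N) :
    cInt ψ i j = cInt ψ' i j := by
  unfold cInt cMat
  by_cases hij : i = j
  · simp [hij]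
  · simp only [hij, if_false]
    have h1 : (ψ (alphav i) (alphav i) : ℂ) = (ψ' (alphav i) (alphav i) : ℂ) := by
      rw [h.1 i]
    have h2 : (ψ (alphav i) (alphav j) : ℂ) * (ψ (alphav j) (alphav i) : ℂ) =
        (ψ' (alphav i) (alphav j) : ℂ) * (ψ' (alphav j) (alphav i) : ℂ) := by
      rw [← Units.val_mul, ← Units.val_mul, h.2 i j]
    rw [h1, h2]

lemma equiv_sMap {N : ℕ} {ψ ψ' : Mz N → Mz N → ℂˣ} (h : Equivb ψ ψ') (i : Fin N) :
    sMap ψ i = sMap ψ' i := by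
  funext v
  unfold sMap
  congr 2
  exact Finsupp.sum_congr (fun j _ => by rw [equiv_cInt h])

lemma starB_bihom {N : ℕ} {ψ : Mz N → Mz N → ℂˣ} (h : IsBihom ψ) (i : Fin N) :
    IsBihom (starB i ψ) := by
  constructor
  · intro a b c
    simp only [starB, ← sHom_apply, map_add, h.1]
  · intro a b c
    simp only [starB, ← sHom_apply, map_add, h.2]

lemma shuffle1 {G : Type*} [CommGroup G] (a c c' e : G) (m : ℤ) :
    a * c ^ (-m) * c' ^ (-m) * e ^ (m * m) = a * (c * c') ^ (-m) * e ^ (m * m) := by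
  rw [mul_zpow]; group

lemma shuffle2 {G : Type*} [CommGroup G] (a b c c' d d' e : G) (m k : ℤ) :
    (a * c ^ (-k) * d ^ (-m) * e ^ (m * k)) * (b * d' ^ (-m) * c' ^ (-k) * e ^ (k * m)) =
    (a * b) * (c * c') ^ (-k) * (d * d') ^ (-m) * (e ^ (m * k) * e ^ (k * m)) := by
  rw [mul_zpow, mul_zpow]
  ac_rfl

lemma starB_apply_alphav {N : ℕ} {ψ : Mz N → Mz N → ℂˣ} (h : IsBihom ψ)
    (i j k : Fin N) :
    starB i ψ (alphav j) (alphav k) =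
      ψ (alphav j) (alphav k) * ψ (alphav j) (alphav i) ^ (-(cInt ψ i k)) *
      ψ (alphav i) (alphav k) ^ (-(cInt ψ i j)) *
      ψ (alphav i) (alphav i) ^ (cInt ψ i j * cInt ψ i k) := by
  have e1 : sMap ψ i (alphav j) = alphav j + (-(cInt ψ i j)) • alphav i := by
    rw [sMap_alphav, sub_eq_add_neg, neg_smul]
  have e2 : sMap ψ i (alphav k) = alphav k + (-(cInt ψ i k)) • alphav i := by
    rw [sMap_alphav, sub_eq_add_neg, neg_smul]
  rw [starB, e1, e2, bihom_expand h]
  ring_nf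

lemma equiv_starB {N : ℕ} {ψ ψ' : Mz N → Mz N → ℂˣ}
    (hb : IsBihom ψ) (hb' : IsBihom ψ') (h : Equivb ψ ψ') (i : Fin N) :
    Equivb (starB i ψ) (starB i ψ') := by
  have hc : ∀ j, cInt ψ i j = cInt ψ' i j := equiv_cInt h i
  constructor
  · intro j
    rw [starB_apply_alphav hb, starB_apply_alphav hb', shuffle1, shuffle1, ← hc j, h.2 j i, h.1 j, h.1 i]
  · intro j k
    rw [starB_apply_alphav hb i j k, starB_apply_alphav hb i k j,
      starB_apply_alphav hb' i j k, starB_apply_alphav hb' i k j,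
      shuffle2, shuffle2, ← hc j, ← hc k, h.2 j k, h.2 j i, h.2 i k, h.1 i]

/- ### chif and wt infrastructure -/

lemma reach_refl {N : ℕ} (χ : Mz N → Mz N → ℂˣ) : Reachable χ χ := ⟨[], rfl⟩

lemma reach_step {N : ℕ} {χ ψ : Mz N → Mz N → ℂˣ} (h : Reachable χ ψ) (i : Fin N) :
    Reachable χ (starB i ψ) := by
  obtain ⟨l, rfl⟩ := h
  exact ⟨l ++ [i], by rw [List.foldl_append]; rfl⟩

lemma reach_chif {N : ℕ} (χ : Mz N → Mz N → ℂˣ) (f : ℕ → Fin N) :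
    ∀ t, Reachable χ (chif χ f t)
  | 0 => reach_refl χ
  | (t + 1) => reach_step (reach_chif χ f t) (f (t + 1))

lemma chif_bihom {N : ℕ} {χ : Mz N → Mz N → ℂˣ} (h : IsBihom χ) (f : ℕ → Fin N) :
    ∀ t, IsBihom (chif χ f t)
  | 0 => h
  | (t + 1) => starB_bihom (chif_bihom h f t) (f (t + 1))

lemma chif_equiv {N : ℕ} {χ χ' : Mz N → Mz N → ℂˣ} (hb : IsBihom χ) (hb' : IsBihom χ')
    (h : Equivb χ χ') (f : ℕ → Fin N) :
    ∀ t, Equivb (chif χ f t) (chif χ' f t)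
  | 0 => h
  | (t + 1) => equiv_starB (chif_bihom hb f t) (chif_bihom hb' f t)
      (chif_equiv hb hb' h f t) (f (t + 1))

lemma wt_congr {N : ℕ} {χ χ' : Mz N → Mz N → ℂˣ} (hb : IsBihom χ) (hb' : IsBihom χ')
    (h : Equivb χ χ') (f : ℕ → Fin N) :
    ∀ t, wt χ f t = wt χ' f t
  | 0 => rfl
  | (t + 1) => by
      show wt χ f t ∘ sMap (chif χ f (t + 1)) (f (t + 1)) =
        wt χ' f t ∘ sMap (chif χ' f (t + 1)) (f (t + 1))
      rw [wt_congr hb hb' h f t, equiv_sMap (chif_equiv hb hb' h f (t + 1)) (f (t + 1))]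

lemma wt_succ {N : ℕ} (χ : Mz N → Mz N → ℂˣ) (f : ℕ → Fin N) (t : ℕ) (v : Mz N) :
    wt χ f (t + 1) v = wt χ f t (sMap (chif χ f (t + 1)) (f (t + 1)) v) := rfl

lemma wt_hom {N : ℕ} (χ : Mz N → Mz N → ℂˣ) (f : ℕ → Fin N) :
    ∀ t, ∃ g : Mz N →+ Mz N, ⇑g = wt χ f t
  | 0 => ⟨AddMonoidHom.id _, rfl⟩
  | (t + 1) => by
      obtain ⟨g, hg⟩ := wt_hom χ f t
      exact ⟨g.comp (sHom (chif χ f (t + 1)) (f (t + 1))), by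
        funext v; simp [hg, sHom_apply, wt_succ]⟩

lemma wt_neg {N : ℕ} (χ : Mz N → Mz N → ℂˣ) (f : ℕ → Fin N) (t : ℕ) (v : Mz N) :
    wt χ f t (-v) = -wt χ f t v := by
  obtain ⟨g, hg⟩ := wt_hom χ f t
  rw [← hg, map_neg]

/- ### cone lemmas -/

lemma alphav_pos {N : ℕ} (i : Fin N) : alphav i ∈ PosCone N := by
  constructor
  · simp [alphav, Finsupp.single_eq_zero]
  · intro k
    simp only [alphav, Finsupp.single_apply]
    split <;> norm_num

lemma pos_not_neg {N : ℕ} {v : Mz N} (hp : v ∈ PosCone N) (hn : v ∈ NegCone N) : False := by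
  apply hp.1
  ext k
  exact le_antisymm (hn k) (hp.2 k)

lemma pos_ne_neg_pos {N : ℕ} {u v : Mz N} (hu : u ∈ PosCone N) (hv : v ∈ PosCone N) :
    u ≠ -v := by
  intro h
  apply pos_not_neg hu
  intro k
  rw [h]
  simp only [Finsupp.neg_apply, Left.neg_nonpos_iff]
  exact hv.2 k

lemma hom_neg_cone {N : ℕ} (g : Mz N →+ Mz N) (hg : ∀ j, g (alphav j) ∈ NegCone N)
    {v : Mz N} (hv : ∀ k, 0 ≤ v k) : g v ∈ NegCone N := by
  intro m
  have hv' : v = v.sum fun k c => Finsupp.single k c := (Finsupp.sum_single v).symm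
  have : g v = v.sum fun k c => c • g (alphav k) := by
    conv_lhs => rw [hv']
    rw [map_finsuppSum]
    refine Finsupp.sum_congr fun k _ => ?_
    have : Finsupp.single k (v k) = v k • alphav k := by
      rw [alphav, Finsupp.smul_single, smul_eq_mul, mul_one]
    rw [this, map_zsmul]
  rw [this, Finsupp.sum_apply]
  apply Finset.sum_nonpos
  intro k _
  simp only [Finsupp.smul_apply, smul_eq_mul]
  exact mul_nonpos_of_nonneg_of_nonpos (hv k) (hg k m)

/- ### the gamma sequence -/

noncomputable def gam {N : ℕ} (χ : Mz N → Mz N → ℂˣ) (f : ℕ → Fin N) (β : Mz N) :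
    ℕ → Mz N
  | 0 => β
  | (t + 1) => sMap (chif χ f (t + 1)) (f (t + 1)) (gam χ f β t)

lemma gam_wt {N : ℕ} (χ : Mz N → Mz N → ℂˣ) (f : ℕ → Fin N) (β : Mz N) :
    ∀ t, wt χ f t (gam χ f β t) = β
  | 0 => rfl
  | (t + 1) => by
      rw [show gam χ f β (t + 1) = sMap (chif χ f (t + 1)) (f (t + 1)) (gam χ f β t) from rfl,
        wt_succ, sMap_invol]
      exact gam_wt χ f β t

section Key

variable {N : ℕ} (χ₀ : Mz N → Mz N → ℂˣ)
  (Rp : (Mz N → Mz N → ℂˣ) → Set (Mz N))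
  (hsub : ∀ ψ, Reachable χ₀ ψ → Rp ψ ⊆ PosCone N)
  (hsimple : ∀ ψ, Reachable χ₀ ψ → ∀ i : Fin N, alphav i ∈ Rp ψ)
  (hrefl : ∀ ψ, Reachable χ₀ ψ → ∀ i : Fin N,
    sMap ψ i '' (Rp ψ \ {alphav i}) = Rp (starB i ψ) \ {alphav i})
  (hstar : ∀ ψ, Reachable χ₀ ψ → ∀ i : Fin N,
    starB i (starB i ψ) = ψ ∧ sMap (starB i ψ) i = sMap ψ i)
  (f : ℕ → Fin N)

include hrefl hstar in
/-- forward reflection of roots -/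
lemma root_forward (t : ℕ) {v : Mz N} (hv : v ∈ Rp (chif χ₀ f t))
    (hne : v ≠ alphav (f (t + 1))) :
    sMap (chif χ₀ f (t + 1)) (f (t + 1)) v ∈ Rp (chif χ₀ f (t + 1)) := by
  have hr := reach_chif χ₀ f t
  have hs := (hstar _ hr (f (t + 1))).2
  have : sMap (chif χ₀ f (t + 1)) (f (t + 1)) v = sMap (chif χ₀ f t) (f (t + 1)) v := by
    rw [show chif χ₀ f (t + 1) = starB (f (t + 1)) (chif χ₀ f t) from rfl, hs]
  rw [this]
  have hmem : sMap (chif χ₀ f t) (f (t + 1)) v ∈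
      sMap (chif χ₀ f t) (f (t + 1)) '' (Rp (chif χ₀ f t) \ {alphav (f (t + 1))}) :=
    Set.mem_image_of_mem _ ⟨hv, hne⟩
  rw [hrefl _ hr] at hmem
  exact hmem.1

include hrefl hstar in
/-- backward reflection of roots -/
lemma root_backward (t : ℕ) {v : Mz N} (hv : v ∈ Rp (chif χ₀ f (t + 1)))
    (hne : v ≠ alphav (f (t + 1))) :
    sMap (chif χ₀ f (t + 1)) (f (t + 1)) v ∈ Rp (chif χ₀ f t) := by
  have hr : Reachable χ₀ (chif χ₀ f (t + 1)) := reach_chif χ₀ f (t + 1)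
  have hmem : sMap (chif χ₀ f (t + 1)) (f (t + 1)) v ∈
      sMap (chif χ₀ f (t + 1)) (f (t + 1)) ''
        (Rp (chif χ₀ f (t + 1)) \ {alphav (f (t + 1))}) :=
    Set.mem_image_of_mem _ ⟨hv, hne⟩
  rw [hrefl _ hr] at hmem
  have hstar1 := (hstar _ (reach_chif χ₀ f t) (f (t + 1))).1
  rw [show chif χ₀ f (t + 1) = starB (f (t + 1)) (chif χ₀ f t) from rfl] at hmem
  rw [hstar1] at hmem
  exact hmem.1

include hrefl hstar in
lemma gam_mem {β : Mz N} (hβ : β ∈ Rp χ₀) :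
    ∀ t, (∀ s, s < t → gam χ₀ f β s ≠ alphav (f (s + 1))) →
      gam χ₀ f β t ∈ Rp (chif χ₀ f t)
  | 0, _ => hβ
  | (t + 1), hne => by
      have ih := gam_mem hβ t (fun s hs => hne s (Nat.lt_succ_of_lt hs))
      exact root_forward χ₀ Rp hrefl hstar f t ih (hne t (Nat.lt_succ_self t))

include hsub hsimple hrefl hstar in
lemma key_sub (n : ℕ)
    (hneg : ∀ j, ∃ k, wt χ₀ f n (alphav j) = -alphav k) :
    Rp χ₀ ⊆ {v | ∃ t, t < n ∧ v = wt χ₀ f t (alphav (f (t + 1)))} := by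
  intro β hβ
  by_cases hex : ∃ t, t < n ∧ gam χ₀ f β t = alphav (f (t + 1))
  · obtain ⟨t, htn, ht⟩ := hex
    exact ⟨t, htn, by rw [← gam_wt χ₀ f β t, ht]⟩
  · exfalso
    push_neg at hex
    have hmem : gam χ₀ f β n ∈ Rp (chif χ₀ f n) :=
      gam_mem χ₀ Rp hrefl hstar f hβ n (fun s hs => hex s hs)
    have hposn : gam χ₀ f β n ∈ PosCone N := hsub _ (reach_chif χ₀ f n) hmem
    obtain ⟨g, hg⟩ := wt_hom χ₀ f n
    have hgneg : ∀ j, g (alphav j) ∈ NegCone N := by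
      intro j
      obtain ⟨k, hk⟩ := hneg j
      rw [hg, hk]
      intro m
      simp only [Finsupp.neg_apply, Left.neg_nonpos_iff]
      exact (alphav_pos k).2 m
    have : g (gam χ₀ f β n) ∈ NegCone N := hom_neg_cone g hgneg hposn.2
    rw [hg, gam_wt] at this
    exact pos_not_neg (hsub χ₀ (reach_refl χ₀) hβ) this

include hsimple hrefl hstar in
lemma key_mem (n : ℕ)
    (hBpos : ∀ t, t < n → wt χ₀ f t (alphav (f (t + 1))) ∈ PosCone N)
    (t : ℕ) (htn : t < n) :
    wt χ₀ f t (alphav (f (t + 1))) ∈ Rp χ₀ := by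
  -- downward descent
  suffices H : ∀ s, ∀ u, u ∈ Rp (chif χ₀ f s) → s ≤ t →
      wt χ₀ f s u = wt χ₀ f t (alphav (f (t + 1))) →
      wt χ₀ f t (alphav (f (t + 1))) ∈ Rp χ₀ by
    exact H t (alphav (f (t + 1))) (hsimple _ (reach_chif χ₀ f t) _) le_rfl rfl
  intro s
  induction s with
  | zero => intro u hu _ hwt; rw [show wt χ₀ f 0 u = u from rfl] at hwt; exact hwt ▸ hu
  | succ s ih =>
    intro u hu hst hwt
    by_cases hcase : u = alphav (f (s + 1))
    · exfalso
      have hBs : wt χ₀ f s (alphav (f (s + 1))) ∈ PosCone N :=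
        hBpos s (lt_of_lt_of_le (Nat.lt_of_succ_le hst) htn.le)
      have : wt χ₀ f (s + 1) u = -(wt χ₀ f s (alphav (f (s + 1)))) := by
        rw [hcase, wt_succ, sMap_alphav_self, wt_neg]
      rw [hwt] at this
      exact pos_ne_neg_pos (hBpos t htn) hBs this
    · have hu' : sMap (chif χ₀ f (s + 1)) (f (s + 1)) u ∈ Rp (chif χ₀ f s) :=
        root_backward χ₀ Rp hrefl hstar f s hu hcase
      exact ih _ hu' (le_of_lt (Nat.lt_of_succ_le hst)) (by rw [← wt_succ, hwt])

end Key

/-- If χ has a longest word (w_y(α_{f(y+1)}) positive for y ≤ n-1 and w_n(Π) = -Π) and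
χ' ≡ χ (same diagonal values and same products), then χ' is also of finite type and
R⁺(χ') = R⁺(χ). -/
theorem roots_depend_only_on_equiv {N : ℕ} (χ χ' : Mz N → Mz N → ℂˣ)
    (hχ : IsBihom χ) (hχ' : IsBihom χ')
    (Rp : (Mz N → Mz N → ℂˣ) → Set (Mz N))
    (hRfin : (Rp χ).Finite)
    (hRsub : ∀ ψ, (Reachable χ ψ ∨ Reachable χ' ψ) → Rp ψ ⊆ PosCone N)
    (hRsimple : ∀ ψ, (Reachable χ ψ ∨ Reachable χ' ψ) → ∀ i : Fin N, alphav i ∈ Rp ψ)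
    (hRrefl : ∀ ψ, (Reachable χ ψ ∨ Reachable χ' ψ) → ∀ i : Fin N,
      sMap ψ i '' (Rp ψ \ {alphav i}) = Rp (starB i ψ) \ {alphav i})
    (hstar : ∀ ψ, (Reachable χ ψ ∨ Reachable χ' ψ) → ∀ i : Fin N,
      starB i (starB i ψ) = ψ ∧ sMap (starB i ψ) i = sMap ψ i)
    (f : ℕ → Fin N)
    (hpos : ∀ y : ℕ, 1 ≤ y → y ≤ (Rp χ).ncard - 1 →
      wt χ f y (alphav (f (y + 1))) ∈ Rp χ)
    (hlong : wt χ f (Rp χ).ncard '' Set.range (alphav (N := N)) =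
      (fun v : Mz N => -v) '' Set.range (alphav (N := N)))
    (hdiag : ∀ i : Fin N, χ (alphav i) (alphav i) = χ' (alphav i) (alphav i))
    (hprod : ∀ j k : Fin N,
      (χ (alphav j) (alphav k) : ℂ) * (χ (alphav k) (alphav j) : ℂ) =
      (χ' (alphav j) (alphav k) : ℂ) * (χ' (alphav k) (alphav j) : ℂ)) :
    (Rp χ').Finite ∧ Rp χ' = Rp χ := by
  set n := (Rp χ).ncard with hn
  have hequiv : Equivb χ χ' := by
    refine ⟨hdiag, fun j k => ?_⟩
    ext
    rw [Units.val_mul, Units.val_mul, hprod j k]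
  have hwteq : ∀ t, wt χ f t = wt χ' f t := wt_congr hχ hχ' hequiv f
  -- negativity of w_n on simple roots
  have hneg : ∀ j, ∃ k, wt χ f n (alphav j) = -alphav k := by
    intro j
    have hj : wt χ f n (alphav j) ∈ wt χ f n '' Set.range (alphav (N := N)) :=
      Set.mem_image_of_mem _ ⟨j, rfl⟩
    rw [hlong] at hj
    obtain ⟨v, ⟨k, hk⟩, hv⟩ := hj
    exact ⟨k, by rw [← hv, hk]⟩
  have hneg' : ∀ j, ∃ k, wt χ' f n (alphav j) = -alphav k := by
    intro j; rw [← hwteq n]; exact hneg j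
  -- positivity of the candidate roots
  have hBpos : ∀ t, t < n → wt χ f t (alphav (f (t + 1))) ∈ PosCone N := by
    intro t htn
    rcases Nat.eq_zero_or_pos t with h0 | h1
    · subst h0; exact alphav_pos (f 1)
    · exact hRsub χ (Or.inl (reach_refl χ))
        (hpos t h1 (Nat.le_sub_one_of_lt htn))
  have hBpos' : ∀ t, t < n → wt χ' f t (alphav (f (t + 1))) ∈ PosCone N := by
    intro t htn; rw [← hwteq t]; exact hBpos t htn
  -- key lemma for χ
  have hsub1 : Rp χ ⊆ {v | ∃ t, t < n ∧ v = wt χ f t (alphav (f (t + 1)))} :=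
    key_sub χ Rp (fun ψ h => hRsub ψ (Or.inl h)) (fun ψ h => hRsimple ψ (Or.inl h))
      (fun ψ h => hRrefl ψ (Or.inl h)) (fun ψ h => hstar ψ (Or.inl h)) f n hneg
  have hmem1 : ∀ t, t < n → wt χ f t (alphav (f (t + 1))) ∈ Rp χ := fun t htn =>
    key_mem χ Rp (fun ψ h => hRsimple ψ (Or.inl h)) (fun ψ h => hRrefl ψ (Or.inl h))
      (fun ψ h => hstar ψ (Or.inl h)) f n hBpos t htn
  -- key lemma for χ'
  have hsub2 : Rp χ' ⊆ {v | ∃ t, t < n ∧ v = wt χ' f t (alphav (f (t + 1)))} :=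
    key_sub χ' Rp (fun ψ h => hRsub ψ (Or.inr h)) (fun ψ h => hRsimple ψ (Or.inr h))
      (fun ψ h => hRrefl ψ (Or.inr h)) (fun ψ h => hstar ψ (Or.inr h)) f n hneg'
  have hmem2 : ∀ t, t < n → wt χ' f t (alphav (f (t + 1))) ∈ Rp χ' := fun t htn =>
    key_mem χ' Rp (fun ψ h => hRsimple ψ (Or.inr h)) (fun ψ h => hRrefl ψ (Or.inr h))
      (fun ψ h => hstar ψ (Or.inr h)) f n hBpos' t htn
  have heq : Rp χ' = Rp χ := by
    apply Set.Subset.antisymm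
    · intro v hv
      obtain ⟨t, htn, rfl⟩ := hsub2 hv
      rw [← hwteq t]
      exact hmem1 t htn
    · intro v hv
      obtain ⟨t, htn, rfl⟩ := hsub1 hv
      rw [hwteq t]
      exact hmem2 t htn
  exact ⟨heq ▸ hRfin, heq⟩
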